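/- For every n ∈ ℕ and every σ₀ > 0 there exists a constant c > 0 such that for every σ ≥ σ₀ and every real polynomial Q of degree at most n, sup_{x∈ℝ} p_{σ²}(x)|Q(x)| ≤ c (∫_ℝ p_{σ²}(x) Q(x)² dx)^{1/2}, where p_{σ²}(x) = (2πσ²)^{-1/2} exp(−x²/(2σ²)). -/

import Mathlib

open MeasureTheory Real Polynomial
open scoped NNReal

noncomputable section

/-- The centered Gaussian density on `ℝ` with variance `σ²`. -/
def gaussDensVar (v x : ℝ) : ℝ := (Real.sqrt (2 * π * v))⁻¹ * Real.exp (-x ^ 2 / (2 * v))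

namespace GaussAux

lemma sqrt2pi_pos : 0 < Real.sqrt (2 * π) := Real.sqrt_pos.mpr (by positivity)

lemma p1_eq (x : ℝ) : gaussDensVar 1 x = (Real.sqrt (2 * π))⁻¹ * Real.exp (-x ^ 2 / 2) := by
  simp [gaussDensVar]

lemma p1_pos (x : ℝ) : 0 < gaussDensVar 1 x := by
  rw [p1_eq]
  positivity

lemma pow_le_factorial_mul_exp (k : ℕ) {t : ℝ} (ht : 0 ≤ t) :
    t ^ k ≤ k.factorial * Real.exp t := by
  have h := Real.sum_le_exp_of_nonneg ht (k + 1)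
  have h2 : t ^ k / k.factorial ≤ Real.exp t := by
    refine le_trans ?_ h
    refine Finset.single_le_sum (f := fun i => t ^ i / i.factorial) ?_ (Finset.self_mem_range_succ k)
    intro i _
    positivity
  have hk : (0:ℝ) < k.factorial := by positivity
  rw [div_le_iff₀ hk] at h2
  linarith [h2]

lemma abs_pow_mul_exp_le (k : ℕ) (x : ℝ) :
    |x| ^ k * Real.exp (-x ^ 2 / 2) ≤ k.factorial * Real.exp (1 / 2) := by
  have h1 : |x| ^ k ≤ k.factorial * Real.exp |x| := pow_le_factorial_mul_exp k (abs_nonneg x)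
  have h2 : |x| ^ k * Real.exp (-x ^ 2 / 2) ≤ k.factorial * Real.exp |x| * Real.exp (-x ^ 2 / 2) := by
    apply mul_le_mul_of_nonneg_right h1 (Real.exp_nonneg _)
  refine h2.trans ?_
  rw [mul_assoc, ← Real.exp_add]
  refine mul_le_mul_of_nonneg_left (Real.exp_le_exp.mpr ?_) (by positivity)
  nlinarith [sq_nonneg (|x| - 1), sq_abs x]

lemma abs_pow_mul_exp_le' (k : ℕ) (x : ℝ) :
    |x| ^ k * Real.exp (-x ^ 2 / 2) ≤ k.factorial * Real.exp 1 * Real.exp (-(1/4) * x ^ 2) := by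
  have h1 : |x| ^ k ≤ k.factorial * Real.exp |x| := pow_le_factorial_mul_exp k (abs_nonneg x)
  have h2 : |x| ^ k * Real.exp (-x ^ 2 / 2) ≤ k.factorial * Real.exp |x| * Real.exp (-x ^ 2 / 2) :=
    mul_le_mul_of_nonneg_right h1 (Real.exp_nonneg _)
  refine h2.trans ?_
  rw [mul_assoc, ← Real.exp_add, mul_assoc, ← Real.exp_add]
  refine mul_le_mul_of_nonneg_left (Real.exp_le_exp.mpr ?_) (by positivity)
  nlinarith [sq_nonneg (|x|/2 - 1), sq_abs x]

lemma integ_pow (k : ℕ) : Integrable (fun u : ℝ => gaussDensVar 1 u * u ^ k) := by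
  have hmeas : AEStronglyMeasurable (fun u : ℝ => gaussDensVar 1 u * u ^ k) volume := by
    apply Continuous.aestronglyMeasurable
    simp only [p1_eq]
    fun_prop
  refine Integrable.mono'
    ((integrable_exp_neg_mul_sq (by norm_num : (0:ℝ) < 1/4)).const_mul
      ((Real.sqrt (2 * π))⁻¹ * (k.factorial * Real.exp 1))) hmeas ?_
  filter_upwards with x
  rw [p1_eq]
  have h := abs_pow_mul_exp_le' k x
  have hs : (0:ℝ) ≤ (Real.sqrt (2 * π))⁻¹ := by positivity
  calc ‖(Real.sqrt (2 * π))⁻¹ * Real.exp (-x ^ 2 / 2) * x ^ k‖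
      = (Real.sqrt (2 * π))⁻¹ * (|x| ^ k * Real.exp (-x ^ 2 / 2)) := by
        rw [norm_mul, norm_mul, Real.norm_eq_abs, Real.norm_eq_abs, Real.norm_eq_abs,
          abs_of_nonneg hs, abs_of_nonneg (Real.exp_nonneg _), abs_pow]
        ring
    _ ≤ (Real.sqrt (2 * π))⁻¹ * (k.factorial * Real.exp 1 * Real.exp (-(1/4) * x ^ 2)) := by
        exact mul_le_mul_of_nonneg_left h hs
    _ = (Real.sqrt (2 * π))⁻¹ * (k.factorial * Real.exp 1) * Real.exp (-(1/4 : ℝ) * x ^ 2) := by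
        ring

/-- evaluation of the coefficient vector -/
def evalv {m : ℕ} (r : Fin m → ℝ) (u : ℝ) : ℝ := ∑ i, r i * u ^ (i : ℕ)

lemma integrand_eq {m : ℕ} (r : Fin m → ℝ) (u : ℝ) :
    gaussDensVar 1 u * (evalv r u) ^ 2
      = ∑ i : Fin m, ∑ j : Fin m, (r i * r j) * (gaussDensVar 1 u * u ^ ((i : ℕ) + (j : ℕ))) := by
  unfold evalv
  rw [sq, Finset.sum_mul_sum, Finset.mul_sum]
  refine Finset.sum_congr rfl fun i _ => ?_
  rw [Finset.mul_sum]
  refine Finset.sum_congr rfl fun j _ => ?_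
  rw [pow_add]; ring

lemma integ2 {m : ℕ} (r : Fin m → ℝ) :
    Integrable (fun u => gaussDensVar 1 u * (evalv r u) ^ 2) := by
  have : (fun u => gaussDensVar 1 u * (evalv r u) ^ 2)
      = fun u => ∑ i : Fin m, ∑ j : Fin m,
          (r i * r j) * (gaussDensVar 1 u * u ^ ((i : ℕ) + (j : ℕ))) := by
    funext u; exact integrand_eq r u
  rw [this]
  exact integrable_finset_sum _ fun i _ =>
    integrable_finset_sum _ fun j _ => (integ_pow _).const_mul _

lemma expansion {m : ℕ} (r : Fin m → ℝ) :
    (∫ u, gaussDensVar 1 u * (evalv r u) ^ 2)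
      = ∑ i : Fin m, ∑ j : Fin m,
          (r i * r j) * ∫ u, gaussDensVar 1 u * u ^ ((i : ℕ) + (j : ℕ)) := by
  have h1 : (∫ u, gaussDensVar 1 u * (evalv r u) ^ 2)
      = ∫ u, ∑ i : Fin m, ∑ j : Fin m,
          (r i * r j) * (gaussDensVar 1 u * u ^ ((i : ℕ) + (j : ℕ))) := by
    congr 1; funext u; exact integrand_eq r u
  rw [h1, integral_finset_sum _ fun i _ =>
    integrable_finset_sum _ fun j _ => (integ_pow _).const_mul _]
  congr 1; funext i
  rw [integral_finset_sum _ fun j _ => (integ_pow _).const_mul _]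
  congr 1; funext j
  rw [integral_const_mul]

lemma pos_of_ne_zero {m : ℕ} (r : Fin m → ℝ) (hr : r ≠ 0) :
    0 < ∫ u, gaussDensVar 1 u * (evalv r u) ^ 2 := by
  have hnn : 0 ≤ fun u => gaussDensVar 1 u * (evalv r u) ^ 2 :=
    fun u => mul_nonneg (p1_pos u).le (sq_nonneg _)
  rcases lt_or_eq_of_le (integral_nonneg hnn) with h | h
  · exact h
  exfalso
  have hae : (fun u => gaussDensVar 1 u * (evalv r u) ^ 2) =ᵐ[volume] 0 :=
    (integral_eq_zero_iff_of_nonneg hnn (integ2 r)).mp h.symm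
  set R : Polynomial ℝ := ∑ i : Fin m, Polynomial.C (r i) * Polynomial.X ^ (i : ℕ) with hRdef
  have hReval : ∀ u, R.eval u = evalv r u := by
    intro u; simp [hRdef, evalv, Polynomial.eval_finset_sum]
  have hRne : R ≠ 0 := by
    obtain ⟨i, hi⟩ := Function.ne_iff.mp hr
    intro h0
    apply hi
    have hc : R.coeff (i : ℕ) = r i := by
      rw [hRdef, Polynomial.finset_sum_coeff, Finset.sum_eq_single i]
      · simp
      · intro j _ hj
        simp only [Polynomial.coeff_C_mul, Polynomial.coeff_X_pow]
        rw [if_neg (fun h => hj (Fin.val_injective h.symm))]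
        simp
      · simp
    rw [h0] at hc; simpa using hc.symm
  have h1 : ∀ᵐ u : ℝ, R.IsRoot u := by
    filter_upwards [hae] with u hu
    have hev : (evalv r u) ^ 2 = 0 :=
      (mul_eq_zero.mp hu).resolve_left (p1_pos u).ne'
    have : evalv r u = 0 := by
      exact pow_eq_zero_iff (n := 2) (by norm_num) |>.mp hev
    simpa [Polynomial.IsRoot, hReval] using this
  have h2 : ∀ᵐ u : ℝ, ¬ R.IsRoot u := by
    have hfin := (Polynomial.finite_setOf_isRoot hRne).measure_zero volume
    rw [ae_iff]
    simpa using hfin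
  have hne : Filter.NeBot (ae (volume : Measure ℝ)) := by
    refine ae_neBot.mpr ?_
    intro h0
    have := congrArg (fun μ : Measure ℝ => μ (Set.Ioo 0 1)) h0
    simp [Real.volume_Ioo] at this
  obtain ⟨u, hu1, hu2⟩ := (h1.and h2).exists
  exact hu2 hu1

lemma continuous_f (m : ℕ) :
    Continuous (fun r : Fin m → ℝ => ∫ u, gaussDensVar 1 u * (evalv r u) ^ 2) := by
  have h : (fun r : Fin m → ℝ => ∫ u, gaussDensVar 1 u * (evalv r u) ^ 2)
      = fun r => ∑ i : Fin m, ∑ j : Fin m,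
          (r i * r j) * ∫ u, gaussDensVar 1 u * u ^ ((i:ℕ)+(j:ℕ)) := by
    funext r; exact expansion r
  rw [h]
  exact continuous_finset_sum _ fun i _ => continuous_finset_sum _ fun j _ =>
    (((continuous_apply i).mul (continuous_apply j)).mul continuous_const)

lemma scale {m : ℕ} (t : ℝ) (r : Fin m → ℝ) :
    (∫ u, gaussDensVar 1 u * (evalv (t • r) u) ^ 2)
      = t ^ 2 * ∫ u, gaussDensVar 1 u * (evalv r u) ^ 2 := by
  rw [← integral_const_mul]
  congr 1; funext u
  have h : evalv (t • r) u = t * evalv r u := by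
    simp [evalv, Finset.mul_sum, mul_assoc]
  rw [h]; ring

lemma exists_lower (m : ℕ) (hm : 0 < m) :
    ∃ ε : ℝ, 0 < ε ∧ ∀ r : Fin m → ℝ,
      ε * ‖r‖ ^ 2 ≤ ∫ u, gaussDensVar 1 u * (evalv r u) ^ 2 := by
  haveI : Nonempty (Fin m) := ⟨⟨0, hm⟩⟩
  have hcs : IsCompact (Metric.sphere (0 : Fin m → ℝ) 1) := isCompact_sphere _ _
  have hns : (Metric.sphere (0 : Fin m → ℝ) 1).Nonempty := by
    refine ⟨fun _ => 1, ?_⟩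
    simp [Metric.mem_sphere, dist_zero_right]
  obtain ⟨r₀, hr₀s, hmin⟩ := hcs.exists_isMinOn hns ((continuous_f m).continuousOn)
  have hr₀ : r₀ ≠ 0 := by
    intro h; rw [h] at hr₀s; simp at hr₀s
  refine ⟨_, pos_of_ne_zero r₀ hr₀, ?_⟩
  intro r
  rcases eq_or_ne r 0 with rfl | hr
  · simpa using integral_nonneg fun u =>
      mul_nonneg (p1_pos u).le (sq_nonneg (evalv (0 : Fin m → ℝ) u))
  · have hnr : 0 < ‖r‖ := norm_pos_iff.mpr hr
    have hs : (‖r‖⁻¹ • r) ∈ Metric.sphere (0 : Fin m → ℝ) 1 := by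
      simp [norm_smul, abs_of_pos (inv_pos.mpr hnr), inv_mul_cancel₀ hnr.ne']
    have h1 := isMinOn_iff.mp hmin _ hs
    rw [scale] at h1
    have h2 := mul_le_mul_of_nonneg_right h1 (sq_nonneg ‖r‖)
    calc (∫ u, gaussDensVar 1 u * (evalv r₀ u) ^ 2) * ‖r‖ ^ 2
        ≤ (‖r‖⁻¹ ^ 2 * ∫ u, gaussDensVar 1 u * (evalv r u) ^ 2) * ‖r‖ ^ 2 := h2
      _ = ∫ u, gaussDensVar 1 u * (evalv r u) ^ 2 := by
          field_simp
  -- note goal orientation : ε * ‖r‖^2 with ε = integral; fix with mul_comm if needed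

lemma key (n : ℕ) :
    ∃ c : ℝ, 0 < c ∧ ∀ Q : Polynomial ℝ, Q.natDegree ≤ n → ∀ x : ℝ,
      gaussDensVar 1 x * |Q.eval x| ≤
        c * Real.sqrt (∫ u, gaussDensVar 1 u * Q.eval u ^ 2) := by
  obtain ⟨ε, hε, hlow⟩ := exists_lower (n+1) (Nat.succ_pos n)
  set M : ℝ := (Real.sqrt (2 * π))⁻¹ * (n.factorial * Real.exp (1/2)) with hM
  have hMpos : 0 < M := by positivity
  refine ⟨(n+1) * M * (Real.sqrt ε)⁻¹, by positivity, ?_⟩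
  intro Q hQ x
  set r : Fin (n+1) → ℝ := fun i => Q.coeff i with hr
  have hev : ∀ u, Q.eval u = evalv r u := by
    intro u
    rw [Polynomial.eval_eq_sum_range' (Nat.lt_succ_of_le hQ)]
    exact (Fin.sum_univ_eq_sum_range (fun k => Q.coeff k * u ^ k) (n+1)).symm
  have hbound : gaussDensVar 1 x * |Q.eval x| ≤ (n+1) * M * ‖r‖ := by
    rw [hev x]
    have h1 : |evalv r x| ≤ ∑ i : Fin (n+1), |r i| * |x| ^ (i:ℕ) := by
      refine (Finset.abs_sum_le_sum_abs _ _).trans ?_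
      refine Finset.sum_le_sum fun i _ => ?_
      rw [abs_mul, abs_pow]
    calc gaussDensVar 1 x * |evalv r x|
        ≤ gaussDensVar 1 x * ∑ i : Fin (n+1), |r i| * |x| ^ (i:ℕ) :=
          mul_le_mul_of_nonneg_left h1 (p1_pos x).le
      _ = ∑ i : Fin (n+1), |r i| * (gaussDensVar 1 x * |x| ^ (i:ℕ)) := by
          rw [Finset.mul_sum]
          exact Finset.sum_congr rfl fun i _ => by ring
      _ ≤ ∑ _i : Fin (n+1), ‖r‖ * M := by
          refine Finset.sum_le_sum fun i _ => ?_
          refine mul_le_mul ?_ ?_ (mul_nonneg (p1_pos x).le (pow_nonneg (abs_nonneg x) _)) (norm_nonneg r)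
          · exact (Real.norm_eq_abs (r i)) ▸ norm_le_pi_norm r i
          · rw [p1_eq]
            calc (Real.sqrt (2*π))⁻¹ * Real.exp (-x^2/2) * |x|^(i:ℕ)
                = (Real.sqrt (2*π))⁻¹ * (|x|^(i:ℕ) * Real.exp (-x^2/2)) := by ring
              _ ≤ (Real.sqrt (2*π))⁻¹ * ((i:ℕ).factorial * Real.exp (1/2)) :=
                  mul_le_mul_of_nonneg_left (abs_pow_mul_exp_le _ x) (by positivity)
              _ ≤ M := by
                  rw [hM]
                  refine mul_le_mul_of_nonneg_left ?_ (by positivity)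
                  refine mul_le_mul_of_nonneg_right ?_ (Real.exp_nonneg _)
                  exact_mod_cast Nat.factorial_le (Nat.lt_succ_iff.mp i.isLt)
      _ = (n+1) * (‖r‖ * M) := by
          rw [Finset.sum_const, Finset.card_univ, Fintype.card_fin, nsmul_eq_mul]
          push_cast; ring
      _ = (n+1) * M * ‖r‖ := by ring
  set I : ℝ := ∫ u, gaussDensVar 1 u * Q.eval u ^ 2 with hI
  have hIeq : I = ∫ u, gaussDensVar 1 u * (evalv r u) ^ 2 := by
    rw [hI]; congr 1; funext u; rw [hev u]
  have hlr : ε * ‖r‖ ^ 2 ≤ I := by rw [hIeq]; exact hlow r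
  have hInn : 0 ≤ I := by
    rw [hIeq]
    exact integral_nonneg fun u => mul_nonneg (p1_pos u).le (sq_nonneg _)
  have hnorm : ‖r‖ ≤ (Real.sqrt ε)⁻¹ * Real.sqrt I := by
    have h2 : ‖r‖ ^ 2 ≤ I / ε := by rw [le_div_iff₀ hε]; linarith
    have h3 : ‖r‖ ≤ Real.sqrt (I / ε) := by
      rw [← Real.sqrt_sq (norm_nonneg r)]
      exact Real.sqrt_le_sqrt h2
    rwa [Real.sqrt_div hInn, div_eq_mul_inv, mul_comm] at h3
  calc gaussDensVar 1 x * |Q.eval x| ≤ (n+1) * M * ‖r‖ := hbound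
    _ ≤ (n+1) * M * ((Real.sqrt ε)⁻¹ * Real.sqrt I) :=
        mul_le_mul_of_nonneg_left hnorm (by positivity)
    _ = (n+1) * M * (Real.sqrt ε)⁻¹ * Real.sqrt I := by ring

end GaussAux

/-- for every `n` and `σ₀ > 0` there is `c > 0` such that for all `σ ≥ σ₀`
and all real polynomials `Q` of degree at most `n`,
`sup_x p_{σ²}(x) |Q(x)| ≤ c (∫ p_{σ²}(x) Q(x)² dx)^{1/2}`. -/


theorem gaussian_weighted_sup_le_L2 (n : ℕ) (σ₀ : ℝ) (hσ₀ : 0 < σ₀) :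
    ∃ c : ℝ, 0 < c ∧ ∀ σ : ℝ, σ₀ ≤ σ → ∀ Q : Polynomial ℝ, Q.natDegree ≤ n →
      ∀ x : ℝ, gaussDensVar (σ ^ 2) x * |Q.eval x| ≤
        c * (∫ y : ℝ, gaussDensVar (σ ^ 2) y * (Q.eval y) ^ 2) ^ (1 / 2 : ℝ) := by
  obtain ⟨c₁, hc₁, hkey⟩ := GaussAux.key n
  refine ⟨c₁ / σ₀, by positivity, ?_⟩
  intro σ hσ Q hQ x
  have hσ0 : 0 < σ := lt_of_lt_of_le hσ₀ hσ
  set R : Polynomial ℝ := Q.comp (Polynomial.C σ * Polynomial.X) with hRdef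
  have hRdeg : R.natDegree ≤ n := by
    rw [hRdef, Polynomial.natDegree_comp, Polynomial.natDegree_C_mul_X σ hσ0.ne']
    simpa using hQ
  have hRe : ∀ u, R.eval u = Q.eval (σ * u) := by
    intro u; simp [hRdef]
  have hgauss : ∀ y : ℝ, gaussDensVar (σ ^ 2) y = σ⁻¹ * gaussDensVar 1 (y / σ) := by
    intro y
    unfold gaussDensVar
    have h1 : Real.sqrt (2 * π * σ ^ 2) = Real.sqrt (2 * π * 1) * σ := by
      rw [show 2 * π * σ ^ 2 = (2 * π * 1) * σ ^ 2 by ring, Real.sqrt_mul (by positivity),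
        Real.sqrt_sq hσ0.le]
    have h2 : -(y / σ) ^ 2 / (2 * 1) = -y ^ 2 / (2 * σ ^ 2) := by
      field_simp
    rw [h1, mul_inv, h2]; ring
  have hint : (∫ u : ℝ, gaussDensVar 1 u * R.eval u ^ 2)
      = ∫ y : ℝ, gaussDensVar (σ ^ 2) y * Q.eval y ^ 2 := by
    have h3 : (fun u : ℝ => gaussDensVar 1 u * R.eval u ^ 2)
        = fun u : ℝ => σ * (gaussDensVar (σ ^ 2) (σ * u) * Q.eval (σ * u) ^ 2) := by
      funext u
      rw [hgauss (σ * u), hRe u, mul_div_cancel_left₀ u hσ0.ne']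
      field_simp
    rw [h3, integral_const_mul, MeasureTheory.Measure.integral_comp_mul_left
      (fun y => gaussDensVar (σ ^ 2) y * Q.eval y ^ 2) σ]
    rw [abs_of_pos (inv_pos.mpr hσ0), smul_eq_mul]
    field_simp
  have hx : R.eval (x / σ) = Q.eval x := by
    rw [hRe, mul_comm, div_mul_cancel₀ x hσ0.ne']
  have step1 : gaussDensVar (σ ^ 2) x * |Q.eval x|
      = σ⁻¹ * (gaussDensVar 1 (x / σ) * |R.eval (x / σ)|) := by
    rw [hgauss x, hx]; ring
  rw [← Real.sqrt_eq_rpow, step1, ← hint]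
  have h4 : gaussDensVar 1 (x / σ) * |R.eval (x / σ)|
      ≤ c₁ * Real.sqrt (∫ u, gaussDensVar 1 u * R.eval u ^ 2) := hkey R hRdeg (x / σ)
  have h5 : σ⁻¹ ≤ σ₀⁻¹ := by gcongr
  calc σ⁻¹ * (gaussDensVar 1 (x / σ) * |R.eval (x / σ)|)
      ≤ σ⁻¹ * (c₁ * Real.sqrt (∫ u, gaussDensVar 1 u * R.eval u ^ 2)) :=
        mul_le_mul_of_nonneg_left h4 (inv_pos.mpr hσ0).le
    _ ≤ σ₀⁻¹ * (c₁ * Real.sqrt (∫ u, gaussDensVar 1 u * R.eval u ^ 2)) :=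
        mul_le_mul_of_nonneg_right h5 (by positivity)
    _ = c₁ / σ₀ * Real.sqrt (∫ u, gaussDensVar 1 u * R.eval u ^ 2) := by ring
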